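/- At every admissible state q of the 2D Euler equations, the gradient of the entropy function U equals the entropy variables: ∇U(q) = r(q) = ((γ−s)/(γ−1) − β(u²+v²), 2βu, 2βv, −2β), where β := ρ/(2p). -/

import Mathlib

open Real Matrix

noncomputable section

/-- A state of the 2D compressible Euler equations: `(ρ, ρu, ρv, E)`. -/
abbrev EulerState := Fin 4 → ℝ

/-- Density. -/
def rho (q : EulerState) : ℝ := q 0
/-- x-momentum. -/
def mom1 (q : EulerState) : ℝ := q 1
/-- y-momentum. -/
def mom2 (q : EulerState) : ℝ := q 2
/-- Total energy. -/
def toten (q : EulerState) : ℝ := q 3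
/-- Pressure `p = (γ-1)(E - (m₁² + m₂²)/(2ρ))`. -/
def pres (γ : ℝ) (q : EulerState) : ℝ :=
  (γ - 1) * (toten q - (mom1 q ^ 2 + mom2 q ^ 2) / (2 * rho q))
/-- x-velocity `u = m₁/ρ`. -/
def uvel (q : EulerState) : ℝ := mom1 q / rho q
/-- y-velocity `v = m₂/ρ`. -/
def vvel (q : EulerState) : ℝ := mom2 q / rho q
/-- Admissible states: positive density and positive pressure. -/
def admissible (γ : ℝ) (q : EulerState) : Prop := 0 < rho q ∧ 0 < pres γ q
/-- Physical entropy `s = ln(p ρ^(-γ))`. -/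
def entS (γ : ℝ) (q : EulerState) : ℝ := Real.log (pres γ q * rho q ^ (-γ))
/-- Entropy function `U = -ρ s/(γ-1)`. -/
def entU (γ : ℝ) (q : EulerState) : ℝ := -(rho q * entS γ q) / (γ - 1)
/-- `β = ρ/(2p)`. -/
def betaCoef (γ : ℝ) (q : EulerState) : ℝ := rho q / (2 * pres γ q)
/-- Entropy variables `r(q)`. -/
def entVar (γ : ℝ) (q : EulerState) : EulerState :=
  ![(γ - entS γ q) / (γ - 1) - betaCoef γ q * (uvel q ^ 2 + vvel q ^ 2),
    2 * betaCoef γ q * uvel q,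
    2 * betaCoef γ q * vvel q,
    -2 * betaCoef γ q]
/-- x-flux `f(q)`. -/
def fFlux (γ : ℝ) (q : EulerState) : EulerState :=
  ![rho q * uvel q,
    rho q * uvel q ^ 2 + pres γ q,
    rho q * uvel q * vvel q,
    (toten q + pres γ q) * uvel q]
/-- y-flux `g(q)`. -/
def gFlux (γ : ℝ) (q : EulerState) : EulerState :=
  ![rho q * vvel q,
    rho q * uvel q * vvel q,
    rho q * vvel q ^ 2 + pres γ q,
    (toten q + pres γ q) * vvel q]
/-- x-entropy flux `φₓ = -ρ u s/(γ-1)`. -/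
def phiX (γ : ℝ) (q : EulerState) : ℝ := -(rho q * uvel q * entS γ q) / (γ - 1)
/-- y-entropy flux `φ_y = -ρ v s/(γ-1)`. -/
def phiY (γ : ℝ) (q : EulerState) : ℝ := -(rho q * vvel q * entS γ q) / (γ - 1)

/-- Logarithmic mean `(b-a)/(ln b - ln a)`, equal to `a` when `a = b`. -/
def logMean (a b : ℝ) : ℝ := if a = b then a else (b - a) / (Real.log b - Real.log a)

/-- The entropy conservative flux of Chandrashekar. -/
def chandrashekarFlux (γ : ℝ) (qm qp : EulerState) : EulerState :=
  let ρhat := logMean (rho qm) (rho qp)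
  let ubar := (uvel qm + uvel qp) / 2
  let vbar := (vvel qm + vvel qp) / 2
  let βbar := (betaCoef γ qm + betaCoef γ qp) / 2
  let βhat := logMean (betaCoef γ qm) (betaCoef γ qp)
  let ρbar := (rho qm + rho qp) / 2
  let ptil := ρbar / (2 * βbar)
  let vsqbar := (uvel qm ^ 2 + vvel qm ^ 2 + uvel qp ^ 2 + vvel qp ^ 2) / 2
  let Fρ := ρhat * ubar
  let Fρu := ubar * Fρ + ptil
  let Fρv := vbar * Fρ
  ![Fρ, Fρu, Fρv,
    (1 / (2 * (γ - 1) * βhat) - vsqbar / 2) * Fρ + ubar * Fρu + vbar * Fρv]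

/-- Speed of sound `c = √(γ p/ρ)`. -/
def cSound (γ : ℝ) (q : EulerState) : ℝ := Real.sqrt (γ * pres γ q / rho q)
/-- Enthalpy `H = c²/(γ-1) + |v|²/2`. -/
def enthalpyH (γ : ℝ) (q : EulerState) : ℝ :=
  cSound γ q ^ 2 / (γ - 1) + (uvel q ^ 2 + vvel q ^ 2) / 2
/-- The matrix `R` of right eigenvectors of the x-flux Jacobian. -/
def eigMat (γ : ℝ) (q : EulerState) : Matrix (Fin 4) (Fin 4) ℝ :=
  !![1, 1, 0, 1;
     uvel q - cSound γ q, uvel q, 0, uvel q + cSound γ q;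
     vvel q, vvel q, -1, vvel q;
     enthalpyH γ q - cSound γ q * uvel q, (uvel q ^ 2 + vvel q ^ 2) / 2, -vvel q,
       enthalpyH γ q + cSound γ q * uvel q]
/-- Barth's scaling matrix `S = diag(ρ/(2γ), (γ-1)ρ/γ, p, ρ/(2γ))`. -/
def scalMat (γ : ℝ) (q : EulerState) : Matrix (Fin 4) (Fin 4) ℝ :=
  Matrix.diagonal ![rho q / (2 * γ), (γ - 1) * rho q / γ, pres γ q, rho q / (2 * γ)]

/-- Entropy diffusion matrix `Q = R |Λ| S Rᵀ` for a diagonal `|Λ| = diag lam`. -/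
def Qmat (γ : ℝ) (lam : Fin 4 → ℝ) (q : EulerState) : Matrix (Fin 4) (Fin 4) ℝ :=
  eigMat γ q * Matrix.diagonal lam * scalMat γ q * (eigMat γ q)ᵀ

/-- Roe eigenvalues `(|u-c|, |u|, |u|, |u+c|)`. -/
def lamRoe (γ : ℝ) (q : EulerState) : Fin 4 → ℝ :=
  ![|uvel q - cSound γ q|, |uvel q|, |uvel q|, |uvel q + cSound γ q|]
/-- Kinetic energy stable eigenvalues `(|u|+c, |u|, |u|, |u|+c)`. -/
def lamKES (γ : ℝ) (q : EulerState) : Fin 4 → ℝ :=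
  ![|uvel q| + cSound γ q, |uvel q|, |uvel q|, |uvel q| + cSound γ q]
/-- Local Mach number `M = |v|/c`. -/
def machNum (γ : ℝ) (q : EulerState) : ℝ :=
  Real.sqrt (uvel q ^ 2 + vvel q ^ 2) / cSound γ q
/-- Rescaled speed of sound `c̃ = c max(min(M,1), M_cut)`. -/
def cTilde (γ Mcut : ℝ) (q : EulerState) : ℝ :=
  cSound γ q * max (min (machNum γ q) 1) Mcut
/-- Low Mach Roe eigenvalues `(|u-c̃|, |u|, |u|, |u+c̃|)`. -/
def lamRoeLM (γ Mcut : ℝ) (q : EulerState) : Fin 4 → ℝ :=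
  ![|uvel q - cTilde γ Mcut q|, |uvel q|, |uvel q|, |uvel q + cTilde γ Mcut q|]
/-- Low Mach KES eigenvalues `(|u|+c̃, |u|, |u|, |u|+c̃)`. -/
def lamKESLM (γ Mcut : ℝ) (q : EulerState) : Fin 4 → ℝ :=
  ![|uvel q| + cTilde γ Mcut q, |uvel q|, |uvel q|, |uvel q| + cTilde γ Mcut q]

/-- at every admissible state the gradient of the entropy function `U`
equals the entropy variables `r(q)`: the derivative of `U` at `q` is the linear map
`w ↦ r(q) ⬝ᵥ w`. -/
theorem gradient_entropy_eq_entropy_variables (γ : ℝ) (hγ : 1 < γ) (q : EulerState)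
    (hq : admissible γ q) :
    HasFDerivAt (entU γ)
      (∑ i : Fin 4, entVar γ q i •
        (ContinuousLinearMap.proj (R := ℝ) (φ := fun _ : Fin 4 => ℝ) i)) q := by
  obtain ⟨hρ, hp⟩ := hq
  have hρ0 : q 0 ≠ 0 := ne_of_gt hρ
  have hγ1 : γ - 1 ≠ 0 := by linarith
  have hpne : pres γ q ≠ 0 := ne_of_gt hp
  have hproj : ∀ i : Fin 4, HasFDerivAt (fun x : EulerState => x i)
      (ContinuousLinearMap.proj (R := ℝ) (φ := fun _ : Fin 4 => ℝ) i) q := fun i =>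
    (ContinuousLinearMap.proj (R := ℝ) (φ := fun _ : Fin 4 => ℝ) i).hasFDerivAt
  have hL2 : (2:ℝ) * q 0 ≠ 0 := mul_ne_zero two_ne_zero hρ0
  have hinv : HasFDerivAt (fun x : EulerState => (2 * x 0)⁻¹)
      ((-((2 * q 0) ^ 2)⁻¹) • ((2:ℝ) • ContinuousLinearMap.proj (R := ℝ) (φ := fun _ : Fin 4 => ℝ) 0)) q :=
    (hasDerivAt_inv hL2).comp_hasFDerivAt q ((hproj 0).const_mul (2:ℝ))
  have hsq1 : HasFDerivAt (fun x : EulerState => x 1 ^ 2)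
      ((↑2 * q 1 ^ 1) • ContinuousLinearMap.proj (R := ℝ) (φ := fun _ : Fin 4 => ℝ) 1) q :=
    by have := (hasDerivAt_pow 2 (q 1)).comp_hasFDerivAt q (hproj 1); exact this
  have hsq2 : HasFDerivAt (fun x : EulerState => x 2 ^ 2)
      ((↑2 * q 2 ^ 1) • ContinuousLinearMap.proj (R := ℝ) (φ := fun _ : Fin 4 => ℝ) 2) q :=
    by have := (hasDerivAt_pow 2 (q 2)).comp_hasFDerivAt q (hproj 2); exact this
  have hA := (hsq1.add hsq2).mul hinv
  have hpres : HasFDerivAt (pres γ)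
      ((γ - 1) • (ContinuousLinearMap.proj (R := ℝ) (φ := fun _ : Fin 4 => ℝ) 3 -
        ((q 1 ^ 2 + q 2 ^ 2) • ((-((2 * q 0) ^ 2)⁻¹) • ((2:ℝ) • ContinuousLinearMap.proj (R := ℝ) (φ := fun _ : Fin 4 => ℝ) 0)) +
          (2 * q 0)⁻¹ • ((↑2 * q 1 ^ 1) • ContinuousLinearMap.proj (R := ℝ) (φ := fun _ : Fin 4 => ℝ) 1 +
            (↑2 * q 2 ^ 1) • ContinuousLinearMap.proj (R := ℝ) (φ := fun _ : Fin 4 => ℝ) 2)))) q := by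
    have heq : pres γ = fun x : EulerState =>
        (γ - 1) * (x 3 - (x 1 ^ 2 + x 2 ^ 2) * (2 * x 0)⁻¹) := by
      funext x
      simp [pres, rho, mom1, mom2, toten, div_eq_mul_inv]
    rw [heq]
    exact ((hproj 3).sub hA).const_mul (γ - 1)
  have hlogp := hpres.log hpne
  have hlog0 := (hproj 0).log hρ0
  have hin := hlogp.sub (hlog0.const_mul γ)
  have hmul := (hproj 0).mul hin
  have hfinal := hmul.neg.mul_const ((γ - 1)⁻¹)
  -- eventual equality of entU with the explicit formula
  have h1 : ∀ᶠ x in nhds q, 0 < x 0 :=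
    (isOpen_lt continuous_const (continuous_apply 0)).eventually_mem hρ
  have hpresCA : ContinuousAt (pres γ) q := by
    have : ContinuousAt (fun x : EulerState =>
        (γ - 1) * (x 3 - (x 1 ^ 2 + x 2 ^ 2) / (2 * x 0))) q := by
      exact continuousAt_const.mul (((continuous_apply 3).continuousAt).sub
        ((((continuous_apply 1).continuousAt.pow 2).add
          ((continuous_apply 2).continuousAt.pow 2)).div
          (continuousAt_const.mul (continuous_apply 0).continuousAt) hL2))
    exact this
  have h2 : ∀ᶠ x in nhds q, 0 < pres γ x :=
    hpresCA.eventually_mem (Ioi_mem_nhds hp)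
  have hF : entU γ =ᶠ[nhds q]
      (fun x : EulerState =>
        -(x 0 * (Real.log (pres γ x) - γ * Real.log (x 0))) * (γ - 1)⁻¹) := by
    filter_upwards [h1, h2] with x hx0 hxp
    have hrp : (0:ℝ) < x 0 ^ (-γ) := Real.rpow_pos_of_pos hx0 _
    simp only [entU, entS, rho]
    rw [Real.log_mul (ne_of_gt hxp) (ne_of_gt hrp), Real.log_rpow hx0]
    ring
  have H := hfinal.congr_of_eventuallyEq hF
  have hS : entS γ q = Real.log (pres γ q) - γ * Real.log (q 0) := by
    have hρ' : (0:ℝ) < q 0 := hρ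
    simp only [entS, rho]
    rw [Real.log_mul hpne (ne_of_gt (Real.rpow_pos_of_pos hρ' _)), Real.log_rpow hρ']
    ring
  refine H.congr_fderiv ?_
  ext w
  simp only [ContinuousLinearMap.sum_apply, ContinuousLinearMap.smul_apply,
    ContinuousLinearMap.proj_apply, ContinuousLinearMap.coe_smul', Pi.smul_apply,
    ContinuousLinearMap.add_apply, ContinuousLinearMap.sub_apply,
    ContinuousLinearMap.neg_apply, ContinuousLinearMap.coe_sub', Pi.sub_apply,
    Pi.add_apply, Pi.neg_apply, smul_eq_mul, Fin.sum_univ_four, entVar, betaCoef,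
    uvel, vvel, rho, mom1, mom2, toten, hS, Matrix.cons_val_zero, Matrix.cons_val_one,
    Matrix.head_cons, Matrix.cons_val_two, Matrix.tail_cons, Matrix.cons_val_three]
  field_simp
  ring
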